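/- For each κ ∈ ℝ with κ² < 1/3, let ψ ∈ ℝ be such that e^{iψ} = (√2·κ + i√(1−3κ²))/√(1−κ²) (note the right-hand side has modulus 1). Then there exists C > 0 such that for all y ≥ 0, |a_d(y;κ) − e^{iψ} a_*(y;κ)| + |b_d(y;κ) − e^{iψ} b_*(y;κ)| ≤ C·exp(−√2·√(1−3κ²)·y). In particular, the defect solution converges as y → +∞ to a phase-rotated periodic orbit of the same wavenumber κ. -/

import Mathlib

open Filter Set

/-- The defect solution a_d(y;κ) of the σ = −1 Ginzburg–Landau system. -/
noncomputable def defectA (κ : ℝ) (y : ℝ) : ℂ :=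
  ((Real.sqrt 2 * κ : ℝ) +
      Complex.I * (Real.sqrt (1 - 3 * κ ^ 2) : ℂ) *
        (Real.tanh (Real.sqrt (1 - 3 * κ ^ 2) * y / Real.sqrt 2) : ℂ)) *
    Complex.exp (Complex.I * κ * y)

/-- b_d(y;κ) = ∂_y a_d(y;κ). -/
noncomputable def defectB (κ : ℝ) : ℝ → ℂ := deriv (defectA κ)

/-- The periodic orbit a_*(y;κ) = √(1−κ²)e^{iκy}. -/
noncomputable def periodicA (κ : ℝ) (y : ℝ) : ℂ :=
  (Real.sqrt (1 - κ ^ 2) : ℂ) * Complex.exp (Complex.I * κ * y)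

/-- The periodic orbit b_*(y;κ) = iκ√(1−κ²)e^{iκy}. -/
noncomputable def periodicB (κ : ℝ) (y : ℝ) : ℂ :=
  Complex.I * κ * (Real.sqrt (1 - κ ^ 2) : ℂ) * Complex.exp (Complex.I * κ * y)

lemma tanh_le_one (x : ℝ) : Real.tanh x ≤ 1 := by
  rw [Real.tanh_eq_sinh_div_cosh, div_le_one (Real.cosh_pos x)]
  linarith [Real.cosh_sub_sinh x, (Real.exp_pos (-x)).le]

lemma my_hasDerivAt_tanh (x : ℝ) : HasDerivAt Real.tanh (1 / Real.cosh x ^ 2) x := by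
  have h := (Real.hasDerivAt_sinh x).div (Real.hasDerivAt_cosh x) ((Real.cosh_pos x).ne')
  have heq : (Real.sinh / Real.cosh) = Real.tanh := by
    funext y; rw [Pi.div_apply, Real.tanh_eq_sinh_div_cosh]
  rw [heq] at h
  refine h.congr_deriv ?_
  have h2 := Real.cosh_sq x
  congr 1
  nlinarith [Real.cosh_pos x]

lemma exp_factor_hasDerivAt (κ y : ℝ) :
    HasDerivAt (fun y : ℝ => Complex.exp (Complex.I * κ * y))
      (Complex.I * κ * Complex.exp (Complex.I * κ * y)) y := by
  have h : HasDerivAt (fun z : ℂ => Complex.exp (Complex.I * κ * z))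
      (Complex.I * κ * Complex.exp (Complex.I * κ * (y : ℂ))) (y : ℂ) := by
    simpa [mul_comm] using ((hasDerivAt_id (y : ℂ)).const_mul (Complex.I * κ)).cexp
  exact h.comp_ofReal

lemma defectA_hasDerivAt (κ y : ℝ) :
    HasDerivAt (defectA κ)
      (Complex.I * (Real.sqrt (1 - 3 * κ ^ 2) : ℂ) *
          ((1 / Real.cosh (Real.sqrt (1 - 3 * κ ^ 2) * y / Real.sqrt 2) ^ 2 *
            (Real.sqrt (1 - 3 * κ ^ 2) / Real.sqrt 2) : ℝ) : ℂ) *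
          Complex.exp (Complex.I * κ * y) +
        Complex.I * κ * defectA κ y) y := by
  have hinner : HasDerivAt (fun y : ℝ => Real.sqrt (1 - 3 * κ ^ 2) * y / Real.sqrt 2)
      (Real.sqrt (1 - 3 * κ ^ 2) / Real.sqrt 2) y := by
    simpa using (((hasDerivAt_id y).const_mul (Real.sqrt (1 - 3 * κ ^ 2))).div_const
      (Real.sqrt 2))
  have htanh : HasDerivAt (fun y : ℝ => Real.tanh (Real.sqrt (1 - 3 * κ ^ 2) * y / Real.sqrt 2))
      (1 / Real.cosh (Real.sqrt (1 - 3 * κ ^ 2) * y / Real.sqrt 2) ^ 2 *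
        (Real.sqrt (1 - 3 * κ ^ 2) / Real.sqrt 2)) y :=
    (my_hasDerivAt_tanh _).comp y hinner
  have hu : HasDerivAt (fun y : ℝ => ((Real.sqrt 2 * κ : ℝ) : ℂ) +
      Complex.I * (Real.sqrt (1 - 3 * κ ^ 2) : ℂ) *
        ((Real.tanh (Real.sqrt (1 - 3 * κ ^ 2) * y / Real.sqrt 2) : ℝ) : ℂ))
      (Complex.I * (Real.sqrt (1 - 3 * κ ^ 2) : ℂ) *
        ((1 / Real.cosh (Real.sqrt (1 - 3 * κ ^ 2) * y / Real.sqrt 2) ^ 2 *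
          (Real.sqrt (1 - 3 * κ ^ 2) / Real.sqrt 2) : ℝ) : ℂ)) y :=
    ((htanh.ofReal_comp).const_mul (Complex.I * (Real.sqrt (1 - 3 * κ ^ 2) : ℂ))).const_add _
  have := hu.mul (exp_factor_hasDerivAt κ y)
  unfold defectA
  refine this.congr_deriv ?_
  ring

lemma defectB_eq (κ y : ℝ) :
    defectB κ y =
      Complex.I * (Real.sqrt (1 - 3 * κ ^ 2) : ℂ) *
          ((1 / Real.cosh (Real.sqrt (1 - 3 * κ ^ 2) * y / Real.sqrt 2) ^ 2 *
            (Real.sqrt (1 - 3 * κ ^ 2) / Real.sqrt 2) : ℝ) : ℂ) *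
          Complex.exp (Complex.I * κ * y) +
        Complex.I * κ * defectA κ y :=
  (defectA_hasDerivAt κ y).deriv

/-- **Exponential convergence of the defect solution to a phase-rotated
periodic orbit.** For κ² < 1/3 and ψ with e^{iψ} = (√2κ + i√(1−3κ²))/√(1−κ²),
there exists C > 0 such that for all y ≥ 0,
|a_d − e^{iψ}a_*| + |b_d − e^{iψ}b_*| ≤ C e^{−√2·√(1−3κ²)·y}. -/
theorem defect_converges_to_periodic
    (κ ψ : ℝ) (hκ : κ ^ 2 < 1 / 3)
    (hψ : Complex.exp (Complex.I * ψ) =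
      ((Real.sqrt 2 * κ : ℝ) + Complex.I * (Real.sqrt (1 - 3 * κ ^ 2) : ℂ)) /
        (Real.sqrt (1 - κ ^ 2) : ℂ)) :
    ∃ C > (0 : ℝ), ∀ y : ℝ, 0 ≤ y →
      ‖defectA κ y - Complex.exp (Complex.I * ψ) * periodicA κ y‖ +
          ‖defectB κ y - Complex.exp (Complex.I * ψ) * periodicB κ y‖
        ≤ C * Real.exp (-(Real.sqrt 2 * Real.sqrt (1 - 3 * κ ^ 2)) * y) := by
  set α := Real.sqrt (1 - 3 * κ ^ 2) with hα
  have h3 : (0:ℝ) < 1 - 3 * κ ^ 2 := by linarith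
  have hαpos : 0 < α := Real.sqrt_pos.mpr h3
  have h1 : (0:ℝ) < 1 - κ ^ 2 := by nlinarith
  have hs : (0:ℝ) < Real.sqrt (1 - κ ^ 2) := Real.sqrt_pos.mpr h1
  have hsne : ((Real.sqrt (1 - κ ^ 2) : ℝ) : ℂ) ≠ 0 := by
    exact_mod_cast Complex.ofReal_ne_zero.mpr hs.ne'
  have hsqrt2 : (0:ℝ) < Real.sqrt 2 := Real.sqrt_pos.mpr (by norm_num)
  refine ⟨2 * α + 4 * α * (α / Real.sqrt 2) + 2 * |κ| * α + 1, by positivity, ?_⟩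
  intro y hy
  set t := α * y / Real.sqrt 2 with ht
  have htnn : 0 ≤ t := by positivity
  set E := Complex.exp (Complex.I * κ * y) with hE
  have hEnorm : ‖E‖ = 1 := by
    rw [hE, Complex.norm_exp]
    simp [Complex.mul_re]
  -- phase identity
  have hphaseA : Complex.exp (Complex.I * ψ) * periodicA κ y =
      ((Real.sqrt 2 * κ : ℝ) + Complex.I * (α : ℂ)) * E := by
    rw [hψ, periodicA, hE]
    field_simp
  have hphaseB : Complex.exp (Complex.I * ψ) * periodicB κ y =
      Complex.I * κ * (((Real.sqrt 2 * κ : ℝ) + Complex.I * (α : ℂ)) * E) := by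
    rw [hψ, periodicB, hE]
    field_simp
  -- difference in A
  have hdiffA : defectA κ y - Complex.exp (Complex.I * ψ) * periodicA κ y =
      Complex.I * (α : ℂ) * (((Real.tanh t : ℝ) : ℂ) - 1) * E := by
    rw [hphaseA, defectA, ← hE, ← ht]
    ring
  have hnormA : ‖defectA κ y - Complex.exp (Complex.I * ψ) * periodicA κ y‖ =
      α * (1 - Real.tanh t) := by
    rw [hdiffA]
    have h1t : Real.tanh t ≤ 1 := tanh_le_one t
    rw [norm_mul, norm_mul, norm_mul, hEnorm, Complex.norm_I]
    have : ‖(((Real.tanh t : ℝ) : ℂ) - 1)‖ = 1 - Real.tanh t := by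
      rw [show (((Real.tanh t : ℝ) : ℂ) - 1) = ((Real.tanh t - 1 : ℝ) : ℂ) by push_cast; ring]
      rw [Complex.norm_real, Real.norm_eq_abs, abs_of_nonpos (by linarith)]
      ring
    rw [this, Complex.norm_real, Real.norm_eq_abs, abs_of_pos hαpos]
    ring
  -- difference in B
  set d : ℝ := 1 / Real.cosh t ^ 2 * (α / Real.sqrt 2) with hd
  have hdiffB : defectB κ y - Complex.exp (Complex.I * ψ) * periodicB κ y =
      Complex.I * (α : ℂ) * ((d : ℝ) : ℂ) * E +
        Complex.I * κ *
          (defectA κ y - Complex.exp (Complex.I * ψ) * periodicA κ y) := by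
    rw [defectB_eq, hphaseB, ← hE, ← ht, ← hd, hphaseA]
    ring
  have hdpos : 0 ≤ d := by positivity
  have hnormB : ‖defectB κ y - Complex.exp (Complex.I * ψ) * periodicB κ y‖ ≤
      α * d + |κ| * (α * (1 - Real.tanh t)) := by
    rw [hdiffB]
    refine le_trans (norm_add_le _ _) ?_
    have e1 : ‖Complex.I * (α : ℂ) * ((d : ℝ) : ℂ) * E‖ = α * d := by
      rw [norm_mul, norm_mul, norm_mul, hEnorm, Complex.norm_I, Complex.norm_real,
        Complex.norm_real, Real.norm_eq_abs, Real.norm_eq_abs, abs_of_pos hαpos,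
        abs_of_nonneg hdpos]
      ring
    have e2 : ‖Complex.I * (κ : ℂ) *
        (defectA κ y - Complex.exp (Complex.I * ψ) * periodicA κ y)‖ =
        |κ| * (α * (1 - Real.tanh t)) := by
      rw [norm_mul, norm_mul, Complex.norm_I, hnormA, Complex.norm_real, Real.norm_eq_abs]
      ring
    rw [e1, e2]
  -- exponential bounds
  have hsq2 : Real.sqrt 2 * Real.sqrt 2 = 2 := Real.mul_self_sqrt (by norm_num)
  have h2t : 2 * t = Real.sqrt 2 * α * y := by
    rw [ht]; field_simp; linear_combination (-y) * hsq2
  have hexp2t : Real.exp (-(2 * t)) = Real.exp (-(Real.sqrt 2 * α) * y) := by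
    congr 1; rw [h2t]; ring
  set X := Real.exp t with hX
  have hXpos : 0 < X := Real.exp_pos t
  have hcosh_ge : X / 2 ≤ Real.cosh t := by
    rw [Real.cosh_eq]
    have := (Real.exp_pos (-t)).le
    rw [hX]; linarith
  have hcoshpos := Real.cosh_pos t
  have hexpneg2 : Real.exp (-(2 * t)) = 1 / X ^ 2 := by
    rw [Real.exp_neg, two_mul, Real.exp_add, pow_two, one_div, hX]
  have htanh_bound : 1 - Real.tanh t ≤ 2 * Real.exp (-(2 * t)) := by
    rw [hexpneg2]
    have h1t : 1 - Real.tanh t = Real.exp (-t) / Real.cosh t := by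
      rw [Real.tanh_eq_sinh_div_cosh]
      field_simp
      exact Real.cosh_sub_sinh t
    rw [h1t, Real.exp_neg, ← hX]
    calc X⁻¹ / Real.cosh t ≤ X⁻¹ / (X / 2) := by
          apply div_le_div_of_nonneg_left (by positivity) (by positivity) hcosh_ge
      _ = 2 * (1 / X ^ 2) := by field_simp
  have hsech_bound : 1 / Real.cosh t ^ 2 ≤ 4 * Real.exp (-(2 * t)) := by
    rw [hexpneg2]
    have h2 : (X / 2) ^ 2 ≤ Real.cosh t ^ 2 := by
      apply pow_le_pow_left₀ (by positivity) hcosh_ge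
    calc 1 / Real.cosh t ^ 2 ≤ 1 / ((X / 2) ^ 2) := by
          apply div_le_div_of_nonneg_left (by norm_num) (by positivity) h2
      _ = 4 * (1 / X ^ 2) := by field_simp; ring
  -- combine
  have htanh1 : Real.tanh t ≤ 1 := tanh_le_one t
  rw [hnormA, ← hexp2t]
  have hEpos := Real.exp_pos (-(2 * t))
  have hdb : d ≤ (α / Real.sqrt 2) * (4 * Real.exp (-(2 * t))) := by
    rw [hd]
    rw [mul_comm]
    apply mul_le_mul_of_nonneg_left hsech_bound (by positivity)
  calc α * (1 - Real.tanh t) + ‖defectB κ y - Complex.exp (Complex.I * ψ) * periodicB κ y‖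
      ≤ α * (1 - Real.tanh t) + (α * d + |κ| * (α * (1 - Real.tanh t))) := by linarith
    _ ≤ (2 * α + 4 * α * (α / Real.sqrt 2) + 2 * |κ| * α + 1) * Real.exp (-(2 * t)) := by
        have hk : 0 ≤ |κ| := abs_nonneg κ
        nlinarith [mul_le_mul_of_nonneg_left htanh_bound hαpos.le,
          mul_le_mul_of_nonneg_left hdb hαpos.le,
          mul_le_mul_of_nonneg_left
            (mul_le_mul_of_nonneg_left htanh_bound hαpos.le) hk]
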